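/- Let 𝒜 be a full reflective subcategory of a category 𝒦 with reflection R : 𝒦 → 𝒜, and let F ⊣ G be an adjunction with F, G : 𝒦 → 𝒦. If F(𝒜) ⊆ 𝒜 and G(𝒜) ⊆ 𝒜, then there is a natural isomorphism R(F(X)) ≅ F(R(X)) for every object X of 𝒦. -/

import Mathlib

open CategoryTheory

/-- If `𝒜` is a full reflective subcategory of `𝒦` (inclusion `i`, reflection `R`),
`F ⊣ G` an adjunction of endofunctors of `𝒦`, and both `F` and `G` send objects of `𝒜`
into (the essential image of) `𝒜`, then there is a natural isomorphism
`R(F(X)) ≅ F(R(X))` for every `X ∈ 𝒦`. -/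
theorem stmt0 {K : Type*} {A : Type*} [Category K] [Category A]
    (i : A ⥤ K) [Reflective i] (F G : K ⥤ K) (adj : F ⊣ G)
    (hF : ∀ a : A, i.essImage (F.obj (i.obj a)))
    (hG : ∀ a : A, i.essImage (G.obj (i.obj a))) :
    Nonempty ((F ⋙ reflector i ⋙ i) ≅ (reflector i ⋙ i ⋙ F)) := by
  set adjR := reflectorAdjunction i with hadjR
  set η := adjR.unit with hη
  -- Key: the reflector inverts `F.map (η.app X)`.
  have key : ∀ X : K, IsIso ((reflector i).map (F.map (η.app X))) := by
    intro X
    apply isIso_of_coyoneda_map_bijective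
    intro T
    -- Step 1: precomposition with η.app X is bijective on maps into objects of the form i.obj b
    have hb : ∀ b : A, Function.Bijective
        (fun g : i.obj ((reflector i).obj X) ⟶ i.obj b => η.app X ≫ g) := by
      intro b
      have heq : (fun g : i.obj ((reflector i).obj X) ⟶ i.obj b => η.app X ≫ g) =
          (((Functor.FullyFaithful.ofFullyFaithful i).homEquiv
            (X := (reflector i).obj X) (Y := b)).symm.trans (adjR.homEquiv X b)) := by
        funext g
        simp [Adjunction.homEquiv_unit, Functor.FullyFaithful.homEquiv, hη]
      rw [heq]
      exact Equiv.bijective _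
    -- Step 2: precomposition with η.app X is bijective on maps into G.obj (i.obj a)
    have hGa : ∀ a : A, Function.Bijective
        (fun g : i.obj ((reflector i).obj X) ⟶ G.obj (i.obj a) => η.app X ≫ g) := by
      intro a
      obtain ⟨b, ⟨w⟩⟩ := hG a
      have heq : (fun g : i.obj ((reflector i).obj X) ⟶ G.obj (i.obj a) => η.app X ≫ g) =
          (fun h : X ⟶ i.obj b => h ≫ w.hom) ∘
            (fun g : i.obj ((reflector i).obj X) ⟶ i.obj b => η.app X ≫ g) ∘
            (fun g : i.obj ((reflector i).obj X) ⟶ G.obj (i.obj a) => g ≫ w.inv) := by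
        funext g; simp
      rw [heq]
      have hwhom : Function.Bijective (fun h : X ⟶ i.obj b => h ≫ w.hom) :=
        (Iso.homToEquiv w (Z := X)).bijective
      have hwinv : Function.Bijective
          (fun g : i.obj ((reflector i).obj X) ⟶ G.obj (i.obj a) => g ≫ w.inv) :=
        (Iso.homToEquiv w.symm (Z := i.obj ((reflector i).obj X))).bijective
      exact hwhom.comp ((hb b).comp hwinv)
    -- Step 3: precomposition with F.map (η.app X) is bijective on maps into i.obj a
    have h1 : ∀ a : A, Function.Bijective
        (fun g : F.obj (i.obj ((reflector i).obj X)) ⟶ i.obj a => F.map (η.app X) ≫ g) := by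
      intro a
      have heq : (fun g : F.obj (i.obj ((reflector i).obj X)) ⟶ i.obj a =>
          F.map (η.app X) ≫ g) =
          (adj.homEquiv X (i.obj a)).symm ∘
            (fun h : i.obj ((reflector i).obj X) ⟶ G.obj (i.obj a) => η.app X ≫ h) ∘
            (adj.homEquiv (i.obj ((reflector i).obj X)) (i.obj a)) := by
        funext g
        apply (adj.homEquiv X (i.obj a)).injective
        simp [adj.homEquiv_naturality_left]
      rw [heq]
      exact (adj.homEquiv X (i.obj a)).symm.bijective.comp
        ((hGa a).comp (adj.homEquiv _ _).bijective)
    -- Step 4: transfer along adjR.homEquiv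
    have heq : (fun x : (reflector i).obj (F.obj (i.obj ((reflector i).obj X))) ⟶ T =>
        (reflector i).map (F.map (η.app X)) ≫ x) =
        (adjR.homEquiv (F.obj X) T).symm ∘
          (fun g : F.obj (i.obj ((reflector i).obj X)) ⟶ i.obj T => F.map (η.app X) ≫ g) ∘
          (adjR.homEquiv (F.obj (i.obj ((reflector i).obj X))) T) := by
      funext x
      apply (adjR.homEquiv (F.obj X) T).injective
      simp [adjR.homEquiv_naturality_left]
    show Function.Bijective (fun x : (reflector i).obj (F.obj (i.obj ((reflector i).obj X))) ⟶ T =>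
      (reflector i).map (F.map (η.app X)) ≫ x)
    rw [heq]
    exact (adjR.homEquiv (F.obj X) T).symm.bijective.comp
      ((h1 T).comp (adjR.homEquiv (F.obj (i.obj ((reflector i).obj X))) T).bijective)
  have key2 : ∀ X : K, IsIso (η.app (F.obj (i.obj ((reflector i).obj X)))) := by
    intro X
    exact Functor.essImage.unit_isIso (hF ((reflector i).obj X))
  refine ⟨NatIso.ofComponents (fun X => ?_) ?_⟩
  · haveI := key X
    haveI := key2 X
    exact asIso (i.map ((reflector i).map (F.map (η.app X)))) ≪≫
      (asIso (η.app (F.obj (i.obj ((reflector i).obj X))))).symm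
  · intro X Y f
    haveI := key X; haveI := key Y; haveI := key2 X; haveI := key2 Y
    simp only [Functor.comp_obj, Functor.comp_map, Iso.trans_hom, Iso.symm_hom, asIso_inv,
      asIso_hom, Category.assoc]
    have n1 : F.map f ≫ F.map (η.app Y) = F.map (η.app X) ≫ F.map (i.map ((reflector i).map f)) := by
      rw [← Functor.map_comp, ← Functor.map_comp]
      congr 1
      exact η.naturality f
    have n2 : F.map (i.map ((reflector i).map f)) ≫ η.app (F.obj (i.obj ((reflector i).obj Y))) =
        η.app (F.obj (i.obj ((reflector i).obj X))) ≫
          i.map ((reflector i).map (F.map (i.map ((reflector i).map f)))) :=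
      η.naturality _
    have n2' : i.map ((reflector i).map (F.map (i.map ((reflector i).map f)))) ≫
        inv (η.app (F.obj (i.obj ((reflector i).obj Y)))) =
        inv (η.app (F.obj (i.obj ((reflector i).obj X)))) ≫
          F.map (i.map ((reflector i).map f)) := by
      rw [IsIso.comp_inv_eq, Category.assoc, n2, IsIso.inv_hom_id_assoc]
    calc i.map ((reflector i).map (F.map f)) ≫ i.map ((reflector i).map (F.map (η.app Y))) ≫
          inv (η.app (F.obj (i.obj ((reflector i).obj Y))))
        = i.map ((reflector i).map (F.map f ≫ F.map (η.app Y))) ≫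
            inv (η.app (F.obj (i.obj ((reflector i).obj Y)))) := by
          rw [Functor.map_comp, Functor.map_comp, Category.assoc]
      _ = i.map ((reflector i).map (F.map (η.app X))) ≫
            i.map ((reflector i).map (F.map (i.map ((reflector i).map f)))) ≫
            inv (η.app (F.obj (i.obj ((reflector i).obj Y)))) := by
          rw [n1, Functor.map_comp, Functor.map_comp, Category.assoc]
      _ = i.map ((reflector i).map (F.map (η.app X))) ≫
            inv (η.app (F.obj (i.obj ((reflector i).obj X)))) ≫
            F.map (i.map ((reflector i).map f)) := by rw [n2']
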